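/- For any words u and a = a₁…aₙ over Σ and any letter σ, the identity u σ a = Σ_{i=0}^n [u ⧢ (−aᵢ)…(−a₁)] σ ⧢ a_{i+1}…aₙ holds in the shuffle algebra T(Σ), where (−aᵢ)…(−a₁) denotes the reversed word with sign (−1)^i. -/

import Mathlib

noncomputable def shuffle {α : Type*} : List α → List α → (List α →₀ ℚ)
  | [], w => Finsupp.single w 1
  | a :: u, [] => Finsupp.single (a :: u) 1
  | a :: u, b :: v =>
      Finsupp.mapDomain (List.cons a) (shuffle u (b :: v)) +
      Finsupp.mapDomain (List.cons b) (shuffle (a :: u) v)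

noncomputable def shuffleExt {α : Type*} (x y : List α →₀ ℚ) : List α →₀ ℚ :=
  x.sum fun u cu => y.sum fun v cv => (cu * cv) • shuffle u v

namespace ShuffleAux
variable {α : Type*}

@[simp] lemma shuffle_nil_left (v : List α) : shuffle [] v = Finsupp.single v 1 := by
  rw [shuffle]

@[simp] lemma shuffle_nil_right (u : List α) : shuffle u [] = Finsupp.single u 1 := by
  cases u <;> rw [shuffle]

lemma shuffle_cons_cons (a b : α) (u v : List α) :
    shuffle (a::u) (b::v) = Finsupp.mapDomain (List.cons a) (shuffle u (b::v)) +
      Finsupp.mapDomain (List.cons b) (shuffle (a::u) v) := by rw [shuffle]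

/-- mapDomain commutes with Finsupp.sum -/
lemma mapDomain_finsupp_sum {β : Type*} (f : List α → List α) (X : β →₀ ℚ)
    (g : β → ℚ → (List α →₀ ℚ)) :
    Finsupp.mapDomain f (X.sum g) = X.sum fun a b => Finsupp.mapDomain f (g a b) :=
  map_finsuppSum (Finsupp.mapDomain.addMonoidHom f) X g

noncomputable def rmul (X : List α →₀ ℚ) (w : List α) : List α →₀ ℚ :=
  shuffleExt X (Finsupp.single w 1)

noncomputable def lmul (u : List α) (Y : List α →₀ ℚ) : List α →₀ ℚ :=
  shuffleExt (Finsupp.single u 1) Y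

lemma rmul_eq_sum (X : List α →₀ ℚ) (w : List α) :
    rmul X w = X.sum fun p c => c • shuffle p w := by
  unfold rmul shuffleExt
  refine Finsupp.sum_congr fun p _ => ?_
  rw [Finsupp.sum_single_index] <;> simp

lemma lmul_eq_sum (u : List α) (Y : List α →₀ ℚ) :
    lmul u Y = Y.sum fun q c => c • shuffle u q := by
  unfold lmul shuffleExt
  rw [Finsupp.sum_single_index] <;> simp

@[simp] lemma rmul_single (p w : List α) : rmul (Finsupp.single p 1) w = shuffle p w := by
  rw [rmul_eq_sum, Finsupp.sum_single_index] <;> simp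

@[simp] lemma lmul_single (u w : List α) : lmul u (Finsupp.single w 1) = shuffle u w := by
  rw [lmul_eq_sum, Finsupp.sum_single_index] <;> simp

@[simp] lemma rmul_nil (X : List α →₀ ℚ) : rmul X [] = X := by
  rw [rmul_eq_sum]
  simp only [shuffle_nil_right, Finsupp.smul_single', mul_one]
  exact Finsupp.sum_single X

@[simp] lemma lmul_nil (Y : List α →₀ ℚ) : lmul [] Y = Y := by
  rw [lmul_eq_sum]
  simp only [shuffle_nil_left, Finsupp.smul_single', mul_one]
  exact Finsupp.sum_single Y

lemma rmul_add (X Y : List α →₀ ℚ) (w : List α) :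
    rmul (X + Y) w = rmul X w + rmul Y w := by
  rw [rmul_eq_sum, rmul_eq_sum, rmul_eq_sum]
  exact Finsupp.sum_add_index' (fun a => by simp) (fun a b c => add_smul b c _)

lemma lmul_add (u : List α) (Y Z : List α →₀ ℚ) :
    lmul u (Y + Z) = lmul u Y + lmul u Z := by
  rw [lmul_eq_sum, lmul_eq_sum, lmul_eq_sum]
  exact Finsupp.sum_add_index' (fun a => by simp) (fun a b c => add_smul b c _)

lemma lmul_smul (u : List α) (c : ℚ) (Y : List α →₀ ℚ) :
    lmul u (c • Y) = c • lmul u Y := by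
  rw [lmul_eq_sum, lmul_eq_sum, Finsupp.smul_sum]
  rw [Finsupp.sum_smul_index (fun a => by simp)]
  refine Finsupp.sum_congr fun q _ => ?_
  rw [mul_smul]

@[simp] lemma lmul_zero (u : List α) : lmul u (0 : List α →₀ ℚ) = 0 := by
  rw [lmul_eq_sum]; simp

lemma rmul_mapDomain (g : List α → List α) (X : List α →₀ ℚ) (w : List α) :
    rmul (Finsupp.mapDomain g X) w = X.sum fun p c => c • shuffle (g p) w := by
  rw [rmul_eq_sum]
  exact Finsupp.sum_mapDomain_index (fun b => by simp) (fun b c d => add_smul c d _)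

lemma lmul_mapDomain (u : List α) (g : List α → List α) (Y : List α →₀ ℚ) :
    lmul u (Finsupp.mapDomain g Y) = Y.sum fun q c => c • shuffle u (g q) := by
  rw [lmul_eq_sum]
  exact Finsupp.sum_mapDomain_index (fun b => by simp) (fun b c d => add_smul c d _)

-- continuing namespace ShuffleAux (appended into t2 content for testing)
lemma mapDomain_comm (f g : List α → List α) (h : ∀ w, f (g w) = g (f w)) (X : List α →₀ ℚ) :
    Finsupp.mapDomain f (Finsupp.mapDomain g X) = Finsupp.mapDomain g (Finsupp.mapDomain f X) := by
  rw [← Finsupp.mapDomain_comp, ← Finsupp.mapDomain_comp]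
  exact Finsupp.mapDomain_congr fun w _ => h w

lemma rmul_mapDomain_cons (a c : α) (X : List α →₀ ℚ) (w' : List α) :
    rmul (Finsupp.mapDomain (List.cons a) X) (c::w') =
      Finsupp.mapDomain (List.cons a) (rmul X (c::w')) +
      Finsupp.mapDomain (List.cons c) (rmul (Finsupp.mapDomain (List.cons a) X) w') := by
  rw [rmul_mapDomain, rmul_mapDomain, rmul_eq_sum, mapDomain_finsupp_sum, mapDomain_finsupp_sum,
    ← Finsupp.sum_add]
  refine Finsupp.sum_congr fun p _ => ?_
  rw [shuffle_cons_cons, smul_add, Finsupp.mapDomain_smul, Finsupp.mapDomain_smul]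

lemma lmul_cons_mapDomain (a c : α) (u' : List α) (Y : List α →₀ ℚ) :
    lmul (a::u') (Finsupp.mapDomain (List.cons c) Y) =
      Finsupp.mapDomain (List.cons a) (lmul u' (Finsupp.mapDomain (List.cons c) Y)) +
      Finsupp.mapDomain (List.cons c) (lmul (a::u') Y) := by
  rw [lmul_mapDomain, lmul_mapDomain, lmul_eq_sum, mapDomain_finsupp_sum, mapDomain_finsupp_sum,
    ← Finsupp.sum_add]
  refine Finsupp.sum_congr fun q _ => ?_
  rw [shuffle_cons_cons, smul_add, Finsupp.mapDomain_smul, Finsupp.mapDomain_smul]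
lemma mapDomain_append_cons (x a : α) (X : List α →₀ ℚ) :
    Finsupp.mapDomain (fun w => w ++ [x]) (Finsupp.mapDomain (List.cons a) X) =
      Finsupp.mapDomain (List.cons a) (Finsupp.mapDomain (fun w => w ++ [x]) X) := by
  rw [← Finsupp.mapDomain_comp, ← Finsupp.mapDomain_comp]
  exact Finsupp.mapDomain_congr fun w _ => by simp

lemma shuffle_concat (p q : List α) (c d : α) :
    shuffle (p ++ [c]) (q ++ [d]) =
      Finsupp.mapDomain (fun w => w ++ [d]) (shuffle (p ++ [c]) q) +
      Finsupp.mapDomain (fun w => w ++ [c]) (shuffle p (q ++ [d])) := by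
  match p, q with
  | [], [] =>
    simp only [List.nil_append]
    rw [shuffle_cons_cons]
    simp only [shuffle_nil_left, shuffle_nil_right, Finsupp.mapDomain_single, List.nil_append]
    abel
  | [], b::q' =>
    have rec1 := shuffle_concat [] q' c d
    simp only [List.nil_append, List.cons_append] at rec1 ⊢
    rw [shuffle_cons_cons c b [] (q' ++ [d]), rec1, shuffle_cons_cons c b [] q']
    simp only [Finsupp.mapDomain_add, mapDomain_append_cons, Finsupp.mapDomain_single,
      shuffle_nil_left, shuffle_nil_right, List.cons_append, List.append_assoc, List.nil_append]
    abel
  | a::p', [] =>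
    have rec1 := shuffle_concat p' [] c d
    simp only [List.nil_append, List.cons_append] at rec1 ⊢
    rw [shuffle_cons_cons a d (p' ++ [c]) [], rec1, shuffle_cons_cons a d p' []]
    simp only [Finsupp.mapDomain_add, mapDomain_append_cons, Finsupp.mapDomain_single,
      shuffle_nil_left, shuffle_nil_right, List.cons_append, List.append_assoc, List.nil_append]
    abel
  | a::p', b::q' =>
    have rec1 := shuffle_concat p' (b::q') c d
    have rec2 := shuffle_concat (a::p') q' c d
    simp only [List.nil_append, List.cons_append] at rec1 rec2 ⊢
    rw [shuffle_cons_cons a b (p' ++ [c]) (q' ++ [d]), rec1, rec2,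
      shuffle_cons_cons a b (p' ++ [c]) q', shuffle_cons_cons a b p' (q' ++ [d])]
    simp only [Finsupp.mapDomain_add, mapDomain_append_cons, Finsupp.mapDomain_single,
      shuffle_nil_left, shuffle_nil_right, List.cons_append, List.append_assoc, List.nil_append]
    abel
termination_by p.length + q.length
theorem shuffle_assoc (u v w : List α) :
    rmul (shuffle u v) w = lmul u (shuffle v w) := by
  match u, v, w with
  | [], v, w => simp
  | a::u', [], w => simp
  | a::u', b::v', [] => simp
  | a::u', b::v', c::w' =>
    have ih1 := shuffle_assoc u' (b::v') (c::w')
    have ih2 := shuffle_assoc (a::u') v' (c::w')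
    have ih3 := shuffle_assoc (a::u') (b::v') w'
    rw [shuffle_cons_cons b c v' w', lmul_add] at ih1
    rw [shuffle_cons_cons a b u' v', rmul_add] at ih3
    rw [shuffle_cons_cons a b u' v', rmul_add,
      rmul_mapDomain_cons a c _ w', rmul_mapDomain_cons b c _ w', ih1, ih2]
    have key : Finsupp.mapDomain (List.cons c) (rmul (Finsupp.mapDomain (List.cons a) (shuffle u' (b::v'))) w') +
        Finsupp.mapDomain (List.cons c) (rmul (Finsupp.mapDomain (List.cons b) (shuffle (a::u') v')) w') =
        Finsupp.mapDomain (List.cons c) (lmul (a::u') (shuffle (b::v') w')) := by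
      rw [← Finsupp.mapDomain_add, ih3]
    rw [add_add_add_comm, key]
    rw [shuffle_cons_cons b c v' w', lmul_add, lmul_cons_mapDomain a b u' _,
      lmul_cons_mapDomain a c u' _]
    simp only [Finsupp.mapDomain_add]
    abel
termination_by u.length + v.length + w.length
noncomputable def bterm (a : List α) (i : ℕ) : List α →₀ ℚ :=
  match a.drop i with
  | [] => 0
  | x :: s => Finsupp.mapDomain (List.cons x) (shuffle ((a.take i).reverse) s)

lemma bterm_nil {a : List α} {i : ℕ} (h : a.drop i = []) : bterm a i = 0 := by
  simp only [bterm, h]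

lemma bterm_cons {a : List α} {i : ℕ} {x : α} {s : List α} (h : a.drop i = x :: s) :
    bterm a i = Finsupp.mapDomain (List.cons x) (shuffle ((a.take i).reverse) s) := by
  simp only [bterm, h]

lemma step (a : List α) (ha : a ≠ []) (i : ℕ) (hi : i ≤ a.length) :
    shuffle ((a.take i).reverse) (a.drop i) =
      (if i = 0 then 0 else bterm a (i-1)) + bterm a i := by
  cases i with
  | zero =>
    obtain ⟨x, s, rfl⟩ := List.exists_cons_of_ne_nil ha
    rw [bterm_cons (show List.drop 0 (x::s) = x :: s from rfl)]
    simp [Finsupp.mapDomain_single]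
  | succ j =>
    have hj : j < a.length := by omega
    have hne : a.drop j ≠ [] := by
      simp [List.drop_eq_nil_iff]
      omega
    obtain ⟨y, s', hd⟩ := List.exists_cons_of_ne_nil hne
    have hd1 : a.drop (j+1) = s' := by
      rw [← List.drop_drop, hd]
      rfl
    have ht : a.take (j+1) = a.take j ++ [y] := by
      conv_lhs => rw [← List.take_append_drop j a]
      rw [List.take_append, List.take_take, hd]
      have hlen : (a.take j).length = j := by
        rw [List.length_take]
        omega
      rw [hlen]
      simp [Nat.min_def, Nat.succ_sub_one]
    simp only [Nat.succ_ne_zero, if_false, Nat.add_sub_cancel]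
    rw [bterm_cons hd]
    rw [ht, hd1, List.reverse_append, List.reverse_cons, List.reverse_nil, List.nil_append,
      List.singleton_append]
    cases s' with
    | nil =>
      rw [bterm_nil (by rw [hd1])]
      simp [Finsupp.mapDomain_single]
    | cons x s =>
      rw [bterm_cons (show a.drop (j+1) = x :: s from by rw [hd1]), ht,
        List.reverse_append, List.reverse_cons, List.reverse_nil, List.nil_append,
        List.singleton_append]
      rw [shuffle_cons_cons]

lemma antipode (a : List α) (ha : a ≠ []) :
    ∑ i ∈ Finset.range (a.length + 1),
      ((-1:ℚ)^i) • shuffle ((a.take i).reverse) (a.drop i) = 0 := by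
  rw [Finset.sum_congr rfl (fun i hi => by
    rw [step a ha i (Nat.lt_succ_iff.mp (Finset.mem_range.mp hi))])]
  simp only [smul_add]
  rw [Finset.sum_add_distrib]
  have h1 : ∑ i ∈ Finset.range (a.length + 1),
      ((-1:ℚ)^i) • (if i = 0 then (0 : List α →₀ ℚ) else bterm a (i-1)) =
      ∑ i ∈ Finset.range a.length, -(((-1:ℚ)^i) • bterm a i) := by
    rw [Finset.sum_range_succ']
    simp only [Nat.succ_ne_zero, if_false, Nat.add_sub_cancel, reduceIte, smul_zero, add_zero]
    refine Finset.sum_congr rfl fun k _ => ?_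
    rw [pow_succ, mul_comm, mul_smul, neg_one_smul]
  have h2 : ∑ i ∈ Finset.range (a.length + 1), ((-1:ℚ)^i) • bterm a i =
      ∑ i ∈ Finset.range a.length, ((-1:ℚ)^i) • bterm a i := by
    rw [Finset.sum_range_succ, bterm_nil (List.drop_length (l := a))]
    simp
  rw [h1, h2, ← Finset.sum_add_distrib]
  simp
lemma rmul_appended (X : List α →₀ ℚ) (σ x : α) (q : List α) :
    rmul (Finsupp.mapDomain (fun w => w ++ [σ]) X) (q ++ [x]) =
      Finsupp.mapDomain (fun w => w ++ [x])
        (rmul (Finsupp.mapDomain (fun w => w ++ [σ]) X) q) +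
      Finsupp.mapDomain (fun w => w ++ [σ]) (rmul X (q ++ [x])) := by
  rw [rmul_mapDomain, rmul_mapDomain, rmul_eq_sum, mapDomain_finsupp_sum, mapDomain_finsupp_sum,
    ← Finsupp.sum_add]
  refine Finsupp.sum_congr fun p _ => ?_
  rw [shuffle_concat p q σ x, smul_add, Finsupp.mapDomain_smul, Finsupp.mapDomain_smul]

lemma lmul_finset_sum {ι : Type*} (u : List α) (s : Finset ι) (F : ι → List α →₀ ℚ) :
    lmul u (∑ i ∈ s, F i) = ∑ i ∈ s, lmul u (F i) := by
  classical
  induction s using Finset.induction with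
  | empty => simp
  | insert _ _ h ih => rw [Finset.sum_insert h, Finset.sum_insert h, lmul_add, ih]

lemma mapDomain_finset_sum {ι : Type*} (f : List α → List α) (s : Finset ι)
    (F : ι → List α →₀ ℚ) :
    Finsupp.mapDomain f (∑ i ∈ s, F i) = ∑ i ∈ s, Finsupp.mapDomain f (F i) := by
  classical
  induction s using Finset.induction with
  | empty => simp
  | insert _ _ h ih => rw [Finset.sum_insert h, Finset.sum_insert h, Finsupp.mapDomain_add, ih]

lemma rmul_def' (X : List α →₀ ℚ) (w : List α) :
    shuffleExt X (Finsupp.single w 1) = rmul X w := rfl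

end ShuffleAux

open ShuffleAux in
theorem shuffle_tail_decomposition {α : Type*} (u a : List α) (σ : α) :
    Finsupp.single (u ++ σ :: a) (1 : ℚ) =
    ∑ i ∈ Finset.range (a.length + 1),
      ((-1 : ℚ) ^ i) •
        shuffleExt
          (Finsupp.mapDomain (fun w => w ++ [σ]) (shuffle u ((a.take i).reverse)))
          (Finsupp.single (a.drop i) 1) := by
  simp only [rmul_def']
  induction a using List.reverseRecOn with
  | nil =>
    simp only [List.length_nil, zero_add]
    rw [Finset.sum_range_one]
    simp only [pow_zero, one_smul, List.take_nil, List.drop_nil, List.reverse_nil,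
      shuffle_nil_right, Finsupp.mapDomain_single, List.nil_append, rmul_nil]
  | append_singleton t x ih =>
    set m := t.length with hm
    have hlen : (t ++ [x]).length + 1 = (m + 1) + 1 := by simp [m]
    rw [hlen, Finset.sum_range_succ]
    have hterm : ∀ i ∈ Finset.range (m + 1),
        ((-1:ℚ)^i) • rmul (Finsupp.mapDomain (fun w => w ++ [σ])
            (shuffle u (((t ++ [x]).take i).reverse))) ((t ++ [x]).drop i)
        = Finsupp.mapDomain (fun w => w ++ [x])
            (((-1:ℚ)^i) • rmul (Finsupp.mapDomain (fun w => w ++ [σ])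
              (shuffle u ((t.take i).reverse))) (t.drop i))
          + Finsupp.mapDomain (fun w => w ++ [σ])
            (((-1:ℚ)^i) • lmul u (shuffle (((t ++ [x]).take i).reverse) ((t ++ [x]).drop i))) := by
      intro i hi
      have hi' : i ≤ m := Nat.lt_succ_iff.mp (Finset.mem_range.mp hi)
      rw [List.take_append_of_le_length hi', List.drop_append_of_le_length hi',
        rmul_appended (shuffle u ((t.take i).reverse)) σ x (t.drop i),
        shuffle_assoc u ((t.take i).reverse) (t.drop i ++ [x]), smul_add,
        Finsupp.mapDomain_smul, Finsupp.mapDomain_smul]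
    rw [Finset.sum_congr rfl hterm, Finset.sum_add_distrib]
    have htake : (t ++ [x]).take (m + 1) = t ++ [x] := by
      rw [show m + 1 = (t ++ [x]).length by simp [m], List.take_length]
    have hdrop : (t ++ [x]).drop (m + 1) = [] := by
      rw [show m + 1 = (t ++ [x]).length by simp [m], List.drop_length]
    have hlast : ((-1:ℚ)^(m+1)) • rmul (Finsupp.mapDomain (fun w => w ++ [σ])
          (shuffle u (((t ++ [x]).take (m+1)).reverse))) ((t ++ [x]).drop (m+1))
        = Finsupp.mapDomain (fun w => w ++ [σ])
          (((-1:ℚ)^(m+1)) • lmul u (shuffle (((t ++ [x]).take (m+1)).reverse)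
            ((t ++ [x]).drop (m+1)))) := by
      rw [hdrop, rmul_nil, shuffle_nil_right, lmul_single, Finsupp.mapDomain_smul]
    rw [hlast, add_assoc, ← Finset.sum_range_succ (fun i =>
      Finsupp.mapDomain (fun w => w ++ [σ])
        (((-1:ℚ)^i) • lmul u (shuffle (((t ++ [x]).take i).reverse) ((t ++ [x]).drop i)))) (m+1)]
    have hB : ∑ i ∈ Finset.range (m + 1 + 1),
        Finsupp.mapDomain (fun w => w ++ [σ])
          (((-1:ℚ)^i) • lmul u (shuffle (((t ++ [x]).take i).reverse) ((t ++ [x]).drop i))) = 0 := by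
      rw [← mapDomain_finset_sum]
      have h0 : ∑ i ∈ Finset.range (m + 1 + 1),
          ((-1:ℚ)^i) • lmul u (shuffle (((t ++ [x]).take i).reverse) ((t ++ [x]).drop i)) = 0 := by
        have : ∀ i ∈ Finset.range (m + 1 + 1),
            ((-1:ℚ)^i) • lmul u (shuffle (((t ++ [x]).take i).reverse) ((t ++ [x]).drop i))
            = lmul u (((-1:ℚ)^i) • shuffle (((t ++ [x]).take i).reverse) ((t ++ [x]).drop i)) := by
          intro i _
          rw [lmul_smul]
        rw [Finset.sum_congr rfl this, ← lmul_finset_sum]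
        have hlen2 : m + 1 + 1 = (t ++ [x]).length + 1 := by simp [m]
        rw [hlen2, antipode (t ++ [x]) (by simp), lmul_zero]
      rw [h0, Finsupp.mapDomain_zero]
    rw [hB, add_zero, ← mapDomain_finset_sum, ← ih, Finsupp.mapDomain_single]
    simp
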